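/- Let A, B be two interior points of a real conic Φ (the Cayley–Klein hyperbolic plane), and let A_p, B_p be their conjugate points on line p = AB. Then (AB B_p A_p) = cosh²‖AB‖, where ‖AB‖ = (1/2)·log(UVAB) is the hyperbolic distance and U, V are the intersections of p with Φ. -/

import Mathlib

/-- Cross ratio `(ABCD)` of four collinear points, given in an affine coordinate on
their common line. -/
noncomputable def cr (a b c d : ℝ) : ℝ := ((c - a) / (c - b)) / ((d - a) / (d - b))

lemma harm (U V X Xp : ℝ) (hXU : U < X) (hXV : X < V) (h : cr U V X Xp = -1) :
    Xp = (X * (U + V) - 2 * U * V) / (2 * X - U - V) ∧ 2 * X - U - V ≠ 0 := by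
  unfold cr at h
  have hXVne : X - V ≠ 0 := sub_ne_zero.2 hXV.ne
  have hXUne : X - U ≠ 0 := sub_ne_zero.2 (ne_of_gt hXU)
  have hY : (Xp - U) / (Xp - V) ≠ 0 := by
    intro h0
    rw [h0, div_zero] at h
    norm_num at h
  have hXpV : Xp - V ≠ 0 := by
    intro h0; apply hY; rw [h0, div_zero]
  have hXpU : Xp - U ≠ 0 := by
    intro h0; apply hY; rw [h0, zero_div]
  rw [div_eq_iff hY] at h
  have h1 : (X - U) * (Xp - V) = -((X - V) * (Xp - U)) := by
    field_simp at h
    linarith [h]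
  have hd : 2 * X - U - V ≠ 0 := by
    intro h0
    have : (X - U) * (X - V) = 0 := by linear_combination (1/2) * h1 + ((X - Xp)/2) * h0
    rcases mul_eq_zero.1 this with h' | h' <;> [exact hXUne h'; exact hXVne h']
  refine ⟨?_, hd⟩
  rw [eq_div_iff hd]
  linear_combination h1

lemma coshsq (t : ℝ) (htpos : 0 < t) :
    Real.cosh ((1 / 2) * Real.log t) ^ 2 = (t + 1) ^ 2 / (4 * t) := by
  have h1 : (1 / 2 : ℝ) * Real.log t = Real.log (Real.sqrt t) := by
    rw [Real.log_sqrt htpos.le]; ring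
  rw [h1, Real.cosh_log (Real.sqrt_pos.2 htpos)]
  have hsne : Real.sqrt t ≠ 0 := (Real.sqrt_pos.2 htpos).ne'
  have hsq : Real.sqrt t ^ 2 = t := Real.sq_sqrt htpos.le
  field_simp
  rw [hsq]; ring


set_option maxHeartbeats 1000000 in
/-- Cayley–Klein hyperbolic plane: on a line meeting the real absolute conic at `U, V`,
with interior points `A, B` (i.e. between `U` and `V` in an affine chart) and conjugate
points `A_p, B_p` (harmonic conjugates with respect to `U, V`), one has
`(AB B_p A_p) = cosh² ‖AB‖` where `‖AB‖ = (1/2)·log (UVAB)` is the hyperbolic distance. -/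
theorem crossRatio_eq_cosh_sq_dist (U V A B Ap Bp : ℝ) (hUV : U < V)
    (hA : A ∈ Set.Ioo U V) (hB : B ∈ Set.Ioo U V) (hAB : A ≠ B)
    (hAp : cr U V A Ap = -1) (hBp : cr U V B Bp = -1) :
    cr A B Bp Ap = Real.cosh ((1 / 2) * Real.log (cr U V A B)) ^ 2 := by
  obtain ⟨hAU, hAV⟩ := hA
  obtain ⟨hBU, hBV⟩ := hB
  obtain ⟨hApv, hdA⟩ := harm U V A Ap hAU hAV hAp
  obtain ⟨hBpv, hdB⟩ := harm U V B Bp hBU hBV hBp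
  have nAU : A - U ≠ 0 := sub_ne_zero.2 (ne_of_gt hAU)
  have nAV : A - V ≠ 0 := sub_ne_zero.2 (ne_of_lt hAV)
  have nBU : B - U ≠ 0 := sub_ne_zero.2 (ne_of_gt hBU)
  have nBV : B - V ≠ 0 := sub_ne_zero.2 (ne_of_lt hBV)
  -- the cross ratio (UVAB) is positive
  have htval : cr U V A B = ((A - U) * (B - V)) / ((A - V) * (B - U)) := by
    unfold cr
    rw [div_div_div_eq]
  set t : ℝ := ((A - U) * (B - V)) / ((A - V) * (B - U)) with ht
  have htpos : 0 < t := by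
    rw [ht]
    apply div_pos_of_neg_of_neg
    · nlinarith
    · nlinarith
  have hs := coshsq t htpos
  rw [htval, hs]
  have hprod : (A - V) * (B - U) ≠ 0 := mul_ne_zero nAV nBU
  have hS : (A - U) * (B - V) + (A - V) * (B - U) ≠ 0 := by nlinarith
  have key2 : (t + 1) ^ 2 / (4 * t)
      = ((A - U) * (B - V) + (A - V) * (B - U)) ^ 2
        / (4 * ((A - U) * (A - V) * (B - U) * (B - V))) := by
    rw [ht]
    have htne : t ≠ 0 := ne_of_gt htpos
    rw [ht] at htne
    field_simp
  have e1 : (A * (U + V) - 2 * U * V) / (2 * A - U - V) - A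
      = (-(2 * ((A - U) * (A - V)))) / (2 * A - U - V) := by
    rw [div_sub' hdA]; ring_nf
  have e2 : (A * (U + V) - 2 * U * V) / (2 * A - U - V) - B
      = (-((A - U) * (B - V) + (A - V) * (B - U))) / (2 * A - U - V) := by
    rw [div_sub' hdA]; ring_nf
  have e3 : (B * (U + V) - 2 * U * V) / (2 * B - U - V) - A
      = (-((A - U) * (B - V) + (A - V) * (B - U))) / (2 * B - U - V) := by
    rw [div_sub' hdB]; ring_nf
  have e4 : (B * (U + V) - 2 * U * V) / (2 * B - U - V) - B
      = (-(2 * ((B - U) * (B - V)))) / (2 * B - U - V) := by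
    rw [div_sub' hdB]; ring_nf
  have key : cr A B Bp Ap
      = ((A - U) * (B - V) + (A - V) * (B - U)) ^ 2
        / (4 * ((A - U) * (A - V) * (B - U) * (B - V))) := by
    unfold cr
    rw [hApv, hBpv, e1, e2, e3, e4]
    have q1 : -((A - U) * (B - V) + (A - V) * (B - U)) / (2 * B - U - V)
        / (-(2 * ((B - U) * (B - V))) / (2 * B - U - V))
        = ((A - U) * (B - V) + (A - V) * (B - U)) / (2 * ((B - U) * (B - V))) := by
      rw [div_div_div_comm, div_self hdB, div_one, neg_div_neg_eq]
    have q2 : -(2 * ((A - U) * (A - V))) / (2 * A - U - V)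
        / (-((A - U) * (B - V) + (A - V) * (B - U)) / (2 * A - U - V))
        = (2 * ((A - U) * (A - V))) / ((A - U) * (B - V) + (A - V) * (B - U)) := by
      rw [div_div_div_comm, div_self hdA, div_one, neg_div_neg_eq]
    rw [q1, q2]
    rw [div_div_div_eq]
    rw [div_eq_div_iff (by exact mul_ne_zero (mul_ne_zero two_ne_zero (mul_ne_zero nBU nBV)) (mul_ne_zero two_ne_zero (mul_ne_zero nAU nAV))) (by exact mul_ne_zero four_ne_zero (mul_ne_zero (mul_ne_zero (mul_ne_zero nAU nAV) nBU) nBV))]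
    ring
  rw [key, key2]
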